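/- For a > 0 define v_a : ℝ → ℝ by v_a(x) = 2·arctan(x/a). Let n ≥ 1, let K, L ≥ 0 be natural numbers, let α > 0, β ∈ [0,1), a_1,…,a_K > 0, b_1,…,b_L > 0, and let μ = (μ_1,…,μ_n) ∈ ℤ^n with μ_1 > μ_2 > … > μ_n. Then the function V : ℝ^n → ℝ defined by V(ξ) = Σ_{j=1}^n ( (α/2)ξ_j² − 2π(μ_j+β)ξ_j + Σ_{k=1}^K ∫_0^{ξ_j} v_{a_k}(x) dx ) + Σ_{1≤j<j′≤n} Σ_{l=1}^L ∫_0^{ξ_j−ξ_{j′}} v_{b_l}(x) dx tends to +∞ as ‖ξ‖ → ∞; consequently V attains a global minimum on ℝ^n. -/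

import Mathlib

open Real Finset

/-- The rational function `v_a(x) = 2 arctan(x/a)`. -/
noncomputable def vRat (a x : ℝ) : ℝ := 2 * Real.arctan (x / a)

lemma vRat_continuous (a : ℝ) : Continuous (vRat a) := by
  unfold vRat
  exact continuous_const.mul (Real.continuous_arctan.comp (continuous_id.div_const a))

lemma vRat_int_nonneg (a : ℝ) (ha : 0 < a) (t : ℝ) :
    0 ≤ ∫ x in (0:ℝ)..t, vRat a x := by
  rcases le_or_gt 0 t with ht | ht
  · refine intervalIntegral.integral_nonneg ht fun u hu => ?_
    have h1 : 0 ≤ u / a := div_nonneg hu.1 ha.le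
    have h2 : (0:ℝ) ≤ Real.arctan (u / a) := by
      have := Real.arctan_strictMono.monotone h1
      simpa [Real.arctan_zero] using this
    unfold vRat; linarith
  · rw [intervalIntegral.integral_symm]
    have h3 : 0 ≤ ∫ x in t..(0:ℝ), (fun x => - vRat a x) x := by
      refine intervalIntegral.integral_nonneg ht.le fun u hu => ?_
      have h1 : u / a ≤ 0 := div_nonpos_of_nonpos_of_nonneg hu.2 ha.le
      have h2 : Real.arctan (u / a) ≤ 0 := by
        have := Real.arctan_strictMono.monotone h1
        simpa [Real.arctan_zero] using this
      simp only [vRat]; linarith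
    rw [intervalIntegral.integral_neg] at h3
    linarith

lemma vRat_primitive_continuous (a : ℝ) :
    Continuous (fun t : ℝ => ∫ x in (0:ℝ)..t, vRat a x) :=
  intervalIntegral.continuous_primitive
    (fun a' b' => (vRat_continuous a).intervalIntegrable a' b') 0

/-- The rational type A Yang–Yang Morse function is coercive (it tends to `+∞` as
`‖ξ‖ → ∞`) and consequently attains a global minimum on `ℝⁿ`. -/
theorem ratA_morse_coercive
    (n K L : ℕ) (hn : 1 ≤ n)
    (α β : ℝ) (hα : 0 < α) (hβ0 : 0 ≤ β) (hβ1 : β < 1)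
    (a : Fin K → ℝ) (b : Fin L → ℝ)
    (ha : ∀ k, 0 < a k) (hb : ∀ l, 0 < b l)
    (μ : Fin n → ℤ) (hμ : ∀ j j' : Fin n, j < j' → μ j' < μ j)
    (V : (Fin n → ℝ) → ℝ)
    (hV : ∀ ξ : Fin n → ℝ, V ξ =
      (∑ j, ((α / 2) * ξ j ^ 2 - 2 * π * ((μ j : ℝ) + β) * ξ j +
        ∑ k, ∫ x in (0:ℝ)..(ξ j), vRat (a k) x)) +
      (∑ j, ∑ j' ∈ Finset.univ.filter (fun j' => j < j'), ∑ l,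
        ∫ x in (0:ℝ)..(ξ j - ξ j'), vRat (b l) x)) :
    Filter.Tendsto V (Filter.comap (fun ξ : Fin n → ℝ => ‖ξ‖) Filter.atTop)
      Filter.atTop ∧
    ∃ ξ₀ : Fin n → ℝ, ∀ ξ : Fin n → ℝ, V ξ₀ ≤ V ξ := by
  set C : ℝ := ∑ j : Fin n, 2 * π * (|(μ j : ℝ)| + 1) with hCdef
  have hbound : ∀ ξ : Fin n → ℝ, (α / 2) * ‖ξ‖ ^ 2 - C * ‖ξ‖ ≤ V ξ := by
    intro ξ
    rw [hV ξ]
    have h1 : ∀ j : Fin n, (0:ℝ) ≤ ∑ k, ∫ x in (0:ℝ)..(ξ j), vRat (a k) x :=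
      fun j => Finset.sum_nonneg fun k _ => vRat_int_nonneg _ (ha k) _
    have h2 : (0:ℝ) ≤ ∑ j, ∑ j' ∈ Finset.univ.filter (fun j' => j < j'), ∑ l,
        ∫ x in (0:ℝ)..(ξ j - ξ j'), vRat (b l) x :=
      Finset.sum_nonneg fun j _ => Finset.sum_nonneg fun j' _ =>
        Finset.sum_nonneg fun l _ => vRat_int_nonneg _ (hb l) _
    have hξle : ∀ j : Fin n, |ξ j| ≤ ‖ξ‖ := by
      intro j
      simpa [Real.norm_eq_abs] using norm_le_pi_norm ξ j
    have h3 : ∀ j : Fin n,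
        2 * π * ((μ j : ℝ) + β) * ξ j ≤ 2 * π * (|(μ j : ℝ)| + 1) * ‖ξ‖ := by
      intro j
      calc 2 * π * ((μ j : ℝ) + β) * ξ j ≤ |2 * π * ((μ j : ℝ) + β) * ξ j| :=
            le_abs_self _
        _ = 2 * π * |(μ j : ℝ) + β| * |ξ j| := by
            rw [abs_mul, abs_mul]
            rw [abs_of_nonneg (by positivity : (0:ℝ) ≤ 2 * π)]
        _ ≤ 2 * π * (|(μ j : ℝ)| + 1) * ‖ξ‖ := by
            have hab : |(μ j : ℝ) + β| ≤ |(μ j : ℝ)| + 1 := by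
              calc |(μ j : ℝ) + β| ≤ |(μ j : ℝ)| + |β| := abs_add_le _ _
                _ ≤ |(μ j : ℝ)| + 1 := by
                    rw [abs_of_nonneg hβ0]; linarith
            have h2π : (0:ℝ) ≤ 2 * π := by positivity
            gcongr
            exact hξle j
    have hsq : ‖ξ‖ ^ 2 ≤ ∑ j, ξ j ^ 2 := by
      have hsum0 : (0:ℝ) ≤ ∑ j, ξ j ^ 2 :=
        Finset.sum_nonneg fun j _ => sq_nonneg _
      have h0 : ‖ξ‖ ≤ Real.sqrt (∑ j, ξ j ^ 2) := by
        rw [pi_norm_le_iff_of_nonneg (Real.sqrt_nonneg _)]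
        intro j
        rw [Real.norm_eq_abs, ← Real.sqrt_sq_eq_abs]
        exact Real.sqrt_le_sqrt
          (Finset.single_le_sum (fun i _ => sq_nonneg (ξ i)) (Finset.mem_univ j))
      calc ‖ξ‖ ^ 2 ≤ Real.sqrt (∑ j, ξ j ^ 2) ^ 2 := by
            gcongr
        _ = ∑ j, ξ j ^ 2 := Real.sq_sqrt hsum0
    have key : (α / 2) * ‖ξ‖ ^ 2 - C * ‖ξ‖ ≤
        ∑ j, ((α / 2) * ξ j ^ 2 - 2 * π * ((μ j : ℝ) + β) * ξ j) := by
      have step : ∑ j, ((α / 2) * ξ j ^ 2 - 2 * π * (|(μ j : ℝ)| + 1) * ‖ξ‖) ≤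
          ∑ j, ((α / 2) * ξ j ^ 2 - 2 * π * ((μ j : ℝ) + β) * ξ j) :=
        Finset.sum_le_sum fun j _ => by linarith [h3 j]
      refine le_trans ?_ step
      rw [Finset.sum_sub_distrib, ← Finset.mul_sum, ← Finset.sum_mul, ← hCdef]
      have := hsq
      nlinarith [hα]
    have hsplit : ∑ j, ((α / 2) * ξ j ^ 2 - 2 * π * ((μ j : ℝ) + β) * ξ j +
        ∑ k, ∫ x in (0:ℝ)..(ξ j), vRat (a k) x) =
        (∑ j, ((α / 2) * ξ j ^ 2 - 2 * π * ((μ j : ℝ) + β) * ξ j)) +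
        ∑ j, ∑ k, ∫ x in (0:ℝ)..(ξ j), vRat (a k) x := by
      rw [← Finset.sum_add_distrib]
    rw [hsplit]
    have h1' : (0:ℝ) ≤ ∑ j, ∑ k, ∫ x in (0:ℝ)..(ξ j), vRat (a k) x :=
      Finset.sum_nonneg fun j _ => h1 j
    linarith
  have hC0 : 0 ≤ C :=
    Finset.sum_nonneg fun j _ => by positivity
  have hf : Filter.Tendsto (fun r : ℝ => (α / 2) * r ^ 2 - C * r)
      Filter.atTop Filter.atTop := by
    have heq : (fun r : ℝ => (α / 2) * r ^ 2 - C * r) =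
        fun r : ℝ => r * ((α / 2) * r - C) := by
      funext r; ring
    rw [heq]
    refine Filter.Tendsto.atTop_mul_atTop₀ Filter.tendsto_id ?_
    have : Filter.Tendsto (fun r : ℝ => (α / 2) * r) Filter.atTop Filter.atTop :=
      Filter.Tendsto.const_mul_atTop (by positivity) Filter.tendsto_id
    simpa [sub_eq_add_neg] using Filter.tendsto_atTop_add_const_right _ (-C) this
  have hcoer : Filter.Tendsto V
      (Filter.comap (fun ξ : Fin n → ℝ => ‖ξ‖) Filter.atTop) Filter.atTop := by
    refine Filter.tendsto_atTop_mono hbound ?_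
    exact hf.comp Filter.tendsto_comap
  refine ⟨hcoer, ?_⟩
  have hVcont : Continuous V := by
    have hVfun : V = fun ξ : Fin n → ℝ =>
      (∑ j, ((α / 2) * ξ j ^ 2 - 2 * π * ((μ j : ℝ) + β) * ξ j +
        ∑ k, ∫ x in (0:ℝ)..(ξ j), vRat (a k) x)) +
      (∑ j, ∑ j' ∈ Finset.univ.filter (fun j' => j < j'), ∑ l,
        ∫ x in (0:ℝ)..(ξ j - ξ j'), vRat (b l) x) := funext hV
    rw [hVfun]
    refine Continuous.add ?_ ?_
    · refine continuous_finset_sum _ fun j _ => ?_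
      refine Continuous.add ?_ ?_
      · exact (continuous_const.mul ((continuous_apply j).pow 2)).sub
          (continuous_const.mul (continuous_apply j))
      · exact continuous_finset_sum _ fun k _ =>
          (vRat_primitive_continuous (a k)).comp (continuous_apply j)
    · refine continuous_finset_sum _ fun j _ => ?_
      refine continuous_finset_sum _ fun j' _ => ?_
      exact continuous_finset_sum _ fun l _ =>
        (vRat_primitive_continuous (b l)).comp
          ((continuous_apply j).sub (continuous_apply j'))
  have hcc : Filter.Tendsto V (Filter.cocompact (Fin n → ℝ)) Filter.atTop :=
    hcoer.mono_left (Filter.tendsto_iff_comap.mp tendsto_norm_cocompact_atTop)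
  exact hVcont.exists_forall_le hcc
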